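/- (Freiman–Ruzsa theorem for bounded exponent) Let G be an Abelian group of exponent r (every element has order dividing r) and A a finite nonempty subset with |A+A| ≤ K|A|. Then the subgroup ⟨A⟩ generated by A is finite and satisfies |⟨A⟩| ≤ K^2 · r^{K^4} · |A|. -/

import Mathlib

open Pointwise

theorem aux_closure_card {G : Type*} [AddCommGroup G] [DecidableEq G]
    (r : ℕ) (hr : 0 < r) (hexp : ∀ x : G, r • x = 0) (T : Finset G) :
    ((AddSubgroup.closure (T : Set G) : Set G)).Finite ∧
      Nat.card (AddSubgroup.closure (T : Set G)) ≤ r ^ T.card := by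
  haveI : NeZero r := ⟨hr.ne'⟩
  have key : ∀ (n : ℕ) (x : G), ((n : ZMod r)).val • x = n • x := by
    intro n x
    rw [ZMod.val_natCast]
    conv_rhs => rw [← Nat.mod_add_div n r]
    rw [add_smul, mul_smul, hexp, add_zero]
  set f : (↥T → ZMod r) → G := fun c => ∑ t : ↥T, ((c t).val) • (t : G) with hf
  have hsub : ((AddSubgroup.closure (T : Set G) : Set G)) ⊆ Set.range f := by
    intro x hx
    refine AddSubgroup.closure_induction ?_ ?_ ?_ ?_ hx
    · intro x hxT
      refine ⟨Pi.single ⟨x, hxT⟩ 1, ?_⟩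
      show (∑ t : ↥T, (((Pi.single (⟨x, hxT⟩ : ↥T) (1 : ZMod r) : ↥T → ZMod r)) t).val • (t : G)) = x
      rw [Fintype.sum_eq_single (⟨x, hxT⟩ : ↥T)]
      · simp only [Pi.single_eq_same]
        rw [show (1 : ZMod r) = ((1 : ℕ) : ZMod r) by norm_cast, key, one_smul]
      · intro t ht
        rw [Pi.single_eq_of_ne ht, ZMod.val_zero, zero_smul]
    · exact ⟨0, by simp [hf]⟩
    · rintro x y hx hy ⟨c, rfl⟩ ⟨d, rfl⟩
      refine ⟨c + d, ?_⟩
      rw [hf, ← Finset.sum_add_distrib]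
      refine Finset.sum_congr rfl fun t _ => ?_
      have h1 : (((c t).val + (d t).val : ℕ) : ZMod r) = c t + d t := by
        push_cast [ZMod.natCast_val, ZMod.cast_id]
        try rfl
      calc ((c + d) t).val • (t : G) = (((c t).val + (d t).val : ℕ) : ZMod r).val • (t : G) := by
            rw [Pi.add_apply, ← h1] <;> rfl
        _ = ((c t).val + (d t).val) • (t : G) := key _ _
        _ = (c t).val • (t : G) + (d t).val • (t : G) := add_smul _ _ _
    · rintro x hx ⟨c, rfl⟩
      refine ⟨-c, ?_⟩
      rw [hf, ← Finset.sum_neg_distrib]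
      refine Finset.sum_congr rfl fun t _ => ?_
      have h0 : (((-c t).val + (c t).val : ℕ) : ZMod r) = 0 := by
        push_cast [ZMod.natCast_val, ZMod.cast_id]
        try rfl
        ring
      have h2 : (((-(c t)).val + (c t).val)) • (t : G) = 0 := by
        rw [← key, h0, ZMod.val_zero, zero_smul]
      have : ((-c) t).val • (t : G) + (c t).val • (t : G) = 0 := by
        rw [← add_smul]; exact h2
      exact eq_neg_of_add_eq_zero_left this
  have hfin : ((AddSubgroup.closure (T : Set G) : Set G)).Finite :=
    (Set.finite_range f).subset hsub
  refine ⟨hfin, ?_⟩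
  have h1 : Nat.card (AddSubgroup.closure (T : Set G)) =
      ((AddSubgroup.closure (T : Set G) : Set G)).ncard := by
    rw [← SetLike.coe_sort_coe, Nat.card_coe_set_eq]
  rw [h1]
  calc ((AddSubgroup.closure (T : Set G) : Set G)).ncard
      ≤ (Set.range f).ncard := Set.ncard_le_ncard hsub (Set.finite_range f)
    _ = Nat.card (Set.range f) := (Nat.card_coe_set_eq _).symm
    _ ≤ Nat.card (↥T → ZMod r) :=
        Nat.card_le_card_of_surjective _ Set.rangeFactorization_surjective
    _ = r ^ T.card := by
        rw [Nat.card_eq_fintype_card, Fintype.card_fun, ZMod.card, Fintype.card_coe]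

theorem freiman_ruzsa_bounded_exponent {G : Type*} [AddCommGroup G] [DecidableEq G]
    (r : ℕ) (hr : 0 < r) (hexp : ∀ x : G, r • x = 0)
    (A : Finset G) (hA : A.Nonempty) (K : ℝ) (hK : 1 ≤ K)
    (h : ((A + A).card : ℝ) ≤ K * A.card) :
    ((AddSubgroup.closure (A : Set G) : Set G)).Finite ∧
      (Nat.card (AddSubgroup.closure (A : Set G)) : ℝ) ≤
        K ^ 2 * (r : ℝ) ^ (K ^ 4 : ℝ) * A.card := by
  have hA0 : (0:ℝ) < A.card := by exact_mod_cast Finset.card_pos.2 hA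
  -- Step 1 : #(A - A) ≤ K^2 #A
  have h1 : ((A - A).card : ℝ) ≤ K ^ 2 * A.card := by
    have ht := Finset.ruzsa_triangle_inequality_sub_add_add A A A
    have ht' : ((A - A).card : ℝ) * A.card ≤ (A + A).card * (A + A).card := by
      exact_mod_cast ht
    apply (mul_le_mul_iff_of_pos_right hA0).1
    calc ((A - A).card : ℝ) * A.card ≤ (A + A).card * (A + A).card := ht'
      _ ≤ (K * A.card) * (K * A.card) := by
          apply mul_le_mul h h (by positivity) (by positivity)
      _ = K ^ 2 * A.card * A.card := by ring
  -- Step 2 : #(S + A) ≤ K^4 #A where S = A + A - A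
  set S : Finset G := A + A - A with hS
  have hSsub : S + A ⊆ 3 • A - 1 • A := by
    have h3 : (3 • A : Finset G) = A + A + A := by
      rw [show (3 : ℕ) = 2 + 1 from rfl, succ_nsmul, show (2 : ℕ) = 1 + 1 from rfl,
        succ_nsmul, one_nsmul]
    rw [h3, one_nsmul, hS]
    intro x hx
    rw [Finset.mem_add] at hx
    obtain ⟨u, hu, v, hv, rfl⟩ := hx
    rw [Finset.mem_sub] at hu
    obtain ⟨p, hp, q, hq, rfl⟩ := hu
    rw [Finset.mem_sub]
    exact ⟨p + v, Finset.add_mem_add hp hv, q, hq, by abel⟩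
  have h2 : ((S + A).card : ℝ) ≤ K ^ 4 * A.card := by
    have hq := Finset.pluennecke_ruzsa_inequality_nsmul_sub_nsmul_add hA A 3 1
    have haq : (0:ℚ≥0) < A.card := by exact_mod_cast Finset.card_pos.2 hA
    have hq' : (((3 • A - 1 • A).card : ℚ≥0)) * (A.card : ℚ≥0) ^ 4
        ≤ ((A + A).card : ℚ≥0) ^ 4 * A.card := by
      calc (((3 • A - 1 • A).card : ℚ≥0)) * (A.card : ℚ≥0) ^ 4
          ≤ ((((A + A).card : ℚ≥0) / A.card) ^ (3 + 1) * A.card) * (A.card : ℚ≥0) ^ 4 := by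
            exact mul_le_mul_left hq _
        _ = ((A + A).card : ℚ≥0) ^ 4 * A.card := by
            rw [show (3 + 1 : ℕ) = 4 from rfl, div_pow, div_mul_eq_mul_div, div_mul_eq_mul_div,
              div_eq_iff (pow_ne_zero _ haq.ne')]
    have hn : ((3 • A - 1 • A).card) * (A.card) ^ 4 ≤ ((A + A).card) ^ 4 * A.card := by
      exact_mod_cast hq'
    apply (mul_le_mul_iff_of_pos_right (by positivity : (0:ℝ) < (A.card : ℝ) ^ 4)).1
    calc ((S + A).card : ℝ) * (A.card : ℝ) ^ 4
        ≤ ((3 • A - 1 • A).card : ℝ) * (A.card : ℝ) ^ 4 := by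
          have := Finset.card_le_card hSsub
          gcongr
      _ ≤ ((A + A).card : ℝ) ^ 4 * A.card := by exact_mod_cast hn
      _ ≤ (K * A.card) ^ 4 * A.card := by
          gcongr
      _ = K ^ 4 * A.card * (A.card : ℝ) ^ 4 := by ring
  -- Step 3 : covering
  obtain ⟨T, hTS, hTle, hcov⟩ := Finset.ruzsa_covering_add hA h2
  set H := AddSubgroup.closure (T : Set G) with hH
  obtain ⟨hHfin, hHcard⟩ := aux_closure_card r hr hexp T
  -- Step 4 : every sum of a list of elements of A lies in H + (A - A)
  have claim : ∀ l : List G, (∀ x ∈ l, x ∈ A) → l.sum ∈ (H : Set G) + (↑(A - A) : Set G) := by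
    intro l
    induction l with
    | nil =>
      intro _
      obtain ⟨a, ha⟩ := hA
      refine Set.mem_add.2 ⟨0, H.zero_mem, a - a, ?_, by simp⟩
      exact Finset.mem_coe.2 (Finset.mem_sub.2 ⟨a, ha, a, ha, rfl⟩)
    | cons a l ih =>
      intro hmem
      have hal := ih fun x hx => hmem x (List.mem_cons_of_mem _ hx)
      obtain ⟨hh, hhH, d, hd, hsum⟩ := Set.mem_add.1 hal
      obtain ⟨x, hx, y, hy, rfl⟩ := Finset.mem_sub.1 (Finset.mem_coe.1 hd)
      have hmemS : a + x - y ∈ S := by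
        rw [hS, Finset.mem_sub]
        exact ⟨a + x, Finset.add_mem_add (hmem a (List.mem_cons_self)) hx, y, hy, rfl⟩
      obtain ⟨t, ht, e, he, hte⟩ := Finset.mem_add.1 (hcov hmemS)
      refine Set.mem_add.2 ⟨hh + t,
        H.add_mem hhH (AddSubgroup.subset_closure (Finset.mem_coe.2 ht)), e,
        Finset.mem_coe.2 he, ?_⟩
      have he' : e = a + x - y - t := by rw [← hte]; abel
      rw [List.sum_cons, ← hsum, he']
      abel
  -- Step 5 : every element of the closure of A is a sum of a list of elements of A
  have hlist : ∀ x ∈ AddSubgroup.closure (A : Set G),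
      ∃ l : List G, (∀ y ∈ l, y ∈ A) ∧ l.sum = x := by
    intro x hx
    refine AddSubgroup.closure_induction ?_ ?_ ?_ ?_ hx
    · intro x hxA
      exact ⟨[x], by simpa using hxA, by simp⟩
    · exact ⟨[], by simp, rfl⟩
    · rintro x y _ _ ⟨l, hl, hls⟩ ⟨m, hm, hms⟩
      refine ⟨l ++ m, ?_, by rw [List.sum_append, hls, hms]⟩
      intro z hz
      rcases List.mem_append.1 hz with hz | hz
      · exact hl z hz
      · exact hm z hz
    · rintro x _ ⟨l, hl, hls⟩
      refine ⟨(List.replicate (r - 1) l).flatten, ?_, ?_⟩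
      · intro z hz
        obtain ⟨l', hl', hzl'⟩ := List.mem_flatten.1 hz
        rw [List.eq_of_mem_replicate hl'] at hzl'
        exact hl z hzl'
      · rw [List.sum_flatten, List.map_replicate, List.sum_replicate, hls]
        have : (r - 1) • x + x = 0 := by
          have : ((r - 1) + 1) • x = 0 := by rw [Nat.sub_add_cancel hr]; exact hexp x
          rwa [add_smul, one_smul] at this
        exact eq_neg_of_add_eq_zero_left this
  -- Step 6 : conclude
  set F : Finset G := hHfin.toFinset + (A - A) with hF
  have hsubF : ((AddSubgroup.closure (A : Set G) : Set G)) ⊆ ↑F := by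
    intro x hx
    obtain ⟨l, hl, rfl⟩ := hlist x hx
    have := claim l hl
    rwa [hF, Finset.coe_add, Set.Finite.coe_toFinset]
  refine ⟨Set.Finite.subset F.finite_toSet hsubF, ?_⟩
  have hcard1 : Nat.card (AddSubgroup.closure (A : Set G)) ≤ F.card := by
    rw [← SetLike.coe_sort_coe, Nat.card_coe_set_eq]
    calc ((AddSubgroup.closure (A : Set G) : Set G)).ncard ≤ (↑F : Set G).ncard :=
        Set.ncard_le_ncard hsubF F.finite_toSet
      _ = F.card := Set.ncard_coe_finset F
  have hHtf : hHfin.toFinset.card = Nat.card H := by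
    rw [← Set.ncard_coe_finset, Set.Finite.coe_toFinset, ← Nat.card_coe_set_eq,
      SetLike.coe_sort_coe]
  have hcard2 : F.card ≤ Nat.card H * (A - A).card := by
    calc F.card ≤ hHfin.toFinset.card * (A - A).card := Finset.card_add_le
      _ = Nat.card H * (A - A).card := by rw [hHtf]
  have hr1 : (1:ℝ) ≤ (r:ℝ) := by exact_mod_cast hr
  have hrpow : ((r : ℝ)) ^ (T.card : ℕ) ≤ (r:ℝ) ^ (K ^ 4 : ℝ) := by
    rw [← Real.rpow_natCast]
    exact Real.rpow_le_rpow_of_exponent_le hr1 (le_trans (by exact_mod_cast le_refl _) hTle)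
  calc (Nat.card (AddSubgroup.closure (A : Set G)) : ℝ) ≤ (F.card : ℝ) := by
        exact_mod_cast hcard1
    _ ≤ (Nat.card H : ℝ) * ((A - A).card : ℝ) := by exact_mod_cast hcard2
    _ ≤ ((r:ℝ) ^ (T.card : ℕ)) * (K ^ 2 * A.card) := by
        apply mul_le_mul _ h1 (by positivity) (by positivity)
        exact_mod_cast hHcard
    _ ≤ ((r:ℝ) ^ (K ^ 4 : ℝ)) * (K ^ 2 * A.card) := by
        apply mul_le_mul_of_nonneg_right hrpow (by positivity)
    _ = K ^ 2 * (r : ℝ) ^ (K ^ 4 : ℝ) * A.card := by ring
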